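/- Let U be an invertible p×p real matrix, let S_1,…,S_q be a partition of the column index set {1,…,p}, and suppose that for all t ∈ T and all i ≠ j one has (U^{S_i})ᵀ Σ_t U^{S_j} = 0 (i.e., UᵀΣ_tU is block diagonal with respect to S_1,…,S_q). Set W := (U^{-1})ᵀ and, for each j, define the oblique projection matrix P_j := U^{S_j}(W^{S_j})ᵀ (the projection onto the column span of U^{S_j} along the direct sum of the column spans of the other U^{S_i}). Then for every t ∈ T and every j ∈ {1,…,q}, the matrix (U^{S_j})ᵀ Σ_t U^{S_j} is invertible and P_j γ_t = U^{S_j} ((U^{S_j})ᵀ Σ_t U^{S_j})^{-1} (U^{S_j})ᵀ Σ_t γ_t; moreover γ_t = ∑_{j=1}^q P_j γ_t. -/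

import Mathlib

open Matrix Finset MeasureTheory

noncomputable section

/-- Vectors in `ℝ^p`. -/
abbrev Vec (p : ℕ) : Type := Fin p → ℝ

/-- Real `p × p` matrices. -/
abbrev Mat (p : ℕ) : Type := Matrix (Fin p) (Fin p) ℝ

/-- Explained variance `ΔVar(β) = 2 γᵀ C β − βᵀ C β` at a time with covariance `C`
and true parameter `γ`. -/
def dVar {p : ℕ} (C : Mat p) (γ β : Vec p) : ℝ :=
  2 * (γ ⬝ᵥ (C *ᵥ β)) - β ⬝ᵥ (C *ᵥ β)

/-- `β₀` is the unique maximizer of `f` over the linear subspace whose orthogonal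
projection matrix is `P` (membership in the subspace is expressed as `P *ᵥ β = β`). -/
def IsUMaxOn {p : ℕ} (f : Vec p → ℝ) (P : Mat p) (β₀ : Vec p) : Prop :=
  P *ᵥ β₀ = β₀ ∧ ∀ β : Vec p, P *ᵥ β = β → β ≠ β₀ → f β < f β₀

/-- The matrices `P j` are the orthogonal projection matrices of a family of pairwise
orthogonal nonzero linear subspaces of `ℝ^p` whose direct sum is `ℝ^p`. -/
structure OrthPartition (p q : ℕ) (P : Fin q → Mat p) : Prop where
  symm : ∀ j, (P j)ᵀ = P j
  idem : ∀ j, P j * P j = P j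
  nonzero : ∀ j, P j ≠ 0
  orth : ∀ i j, i ≠ j → P i * P j = 0
  sum_one : ∑ j, P j = 1

/-- The submatrix of `U` consisting of the columns indexed by `S`. -/
def colSub {m : ℕ} (U : Matrix (Fin m) (Fin m) ℝ) (S : Finset (Fin m)) :
    Matrix (Fin m) S ℝ :=
  U.submatrix id (fun k => (k : Fin m))


section Helpers

variable {m : ℕ}

lemma colSub_apply (U : Matrix (Fin m) (Fin m) ℝ) (S : Finset (Fin m))
    (a : Fin m) (k : S) : colSub U S a k = U a k := rfl

/-- `colSub U S *ᵥ x = U *ᵥ (extension of x by zero)` -/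
lemma colSub_mulVec (U : Matrix (Fin m) (Fin m) ℝ) (S : Finset (Fin m)) (x : S → ℝ) :
    colSub U S *ᵥ x = U *ᵥ (fun l => if h : l ∈ S then x ⟨l, h⟩ else 0) := by
  ext a
  simp only [colSub, mulVec, dotProduct, submatrix_apply, id]
  rw [eq_comm, ← Finset.sum_subset (Finset.subset_univ S)]
  · rw [← Finset.sum_attach S (fun l => U a l * (if h : l ∈ S then x ⟨l, h⟩ else 0))]
    refine Finset.sum_congr rfl fun k _ => ?_
    rw [dif_pos k.2]
  · intro l _ hl
    simp [hl]

lemma colSub_transpose_mulVec (U : Matrix (Fin m) (Fin m) ℝ) (S : Finset (Fin m))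
    (v : Fin m → ℝ) (k : S) :
    ((colSub U S)ᵀ *ᵥ v) k = (Uᵀ *ᵥ v) (k : Fin m) := by
  simp [colSub, mulVec, dotProduct, transpose_apply]

lemma colSub_conj (U : Matrix (Fin m) (Fin m) ℝ) (C : Matrix (Fin m) (Fin m) ℝ)
    (S : Finset (Fin m)) (k l : S) :
    ((colSub U S)ᵀ * C * colSub U S) k l = (Uᵀ * C * U) (k : Fin m) (l : Fin m) := by
  simp only [colSub, Matrix.mul_apply, transpose_apply, submatrix_apply, id]

end Helpers

/-- Proposition A.1 (i) of the paper, non-orthogonal case: for an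
invertible joint block diagonalizer `U` with index blocks `S_1,…,S_q` and
`W = (U⁻¹)ᵀ`, the oblique projections `P_j = U^{S_j}(W^{S_j})ᵀ` satisfy
`P_j γ_t = U^{S_j} ((U^{S_j})ᵀ Σ_t U^{S_j})⁻¹ (U^{S_j})ᵀ Σ_t γ_t` (with
`(U^{S_j})ᵀ Σ_t U^{S_j}` invertible) and `γ_t = ∑_j P_j γ_t`. -/
theorem stmt19 {p n q : ℕ} (hp : 1 ≤ p) (hn : 1 ≤ n)
    (Cov : Fin n → Mat p) (hCov : ∀ t, (Cov t).PosDef)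
    (γ : Fin n → Vec p)
    (U : Mat p) (hU : IsUnit U.det)
    (S : Fin q → Finset (Fin p))
    (hdisj : ∀ i j, i ≠ j → Disjoint (S i) (S j))
    (hcover : ∀ k : Fin p, ∃ j, k ∈ S j)
    (hblock : ∀ (t : Fin n) (i j : Fin q), i ≠ j →
      ∀ k ∈ S i, ∀ l ∈ S j, (Uᵀ * Cov t * U) k l = 0) :
    ∀ t : Fin n,
      (∀ j : Fin q,
        IsUnit ((colSub U (S j))ᵀ * Cov t * colSub U (S j)) ∧
        (colSub U (S j) * (colSub ((U⁻¹)ᵀ) (S j))ᵀ) *ᵥ γ t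
          = colSub U (S j) *ᵥ
              (((colSub U (S j))ᵀ * Cov t * colSub U (S j))⁻¹ *ᵥ
                ((colSub U (S j))ᵀ *ᵥ ((Cov t) *ᵥ γ t)))) ∧
      γ t = ∑ j : Fin q, (colSub U (S j) * (colSub ((U⁻¹)ᵀ) (S j))ᵀ) *ᵥ γ t := by
  intro t
  set Cv := Cov t with hCv
  have hCsymm : Cvᵀ = Cv := (hCov t).isHermitian.eq
  have hUdet := hU
  -- injectivity of `U *ᵥ ·`
  have hUinj : Function.Injective (U.mulVec) := by
    intro x y hxy
    have : U⁻¹ *ᵥ (U *ᵥ x) = U⁻¹ *ᵥ (U *ᵥ y) := by rw [hxy]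
    simpa [Matrix.mulVec_mulVec, Matrix.nonsing_inv_mul U hU] using this
  set A : Mat p := Uᵀ * Cv * U with hA
  set d : Vec p := U⁻¹ *ᵥ γ t with hd
  -- the key vector identity
  have h1 : A * U⁻¹ = Uᵀ * Cv := by
    rw [hA, Matrix.mul_assoc (Uᵀ * Cv) U U⁻¹, Matrix.mul_nonsing_inv U hU, Matrix.mul_one]
  have hAd : Uᵀ *ᵥ (Cv *ᵥ γ t) = A *ᵥ d := by
    rw [hd]
    simp only [Matrix.mulVec_mulVec]
    rw [h1]
  -- coefficient vectors
  have hcS : ∀ j (k : {x // x ∈ S j}),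
      ((colSub ((U⁻¹)ᵀ) (S j))ᵀ *ᵥ γ t) k = d (k : Fin p) := by
    intro j k
    rw [colSub_transpose_mulVec, transpose_transpose, hd]
  -- positive definiteness of the blocks
  have hMpd : ∀ j : Fin q, ((colSub U (S j))ᵀ * Cv * colSub U (S j)).PosDef := by
    intro j
    rw [posDef_iff_dotProduct_mulVec]
    constructor
    · show _ = _
      ext k l
      simp only [conjTranspose_apply, star_trivial, transpose_apply]
      rw [colSub_conj, colSub_conj]
      have : (Uᵀ * Cv * U)ᵀ = Uᵀ * Cv * U := by
        rw [Matrix.transpose_mul, Matrix.transpose_mul, transpose_transpose, hCsymm,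
          Matrix.mul_assoc]
      exact (congrFun (congrFun this _) _)
    · intro x hx
      set xe : Vec p := fun l => if h : l ∈ S j then x ⟨l, h⟩ else 0 with hxe
      have hxe0 : xe ≠ 0 := by
        intro h0
        apply hx
        ext k
        have h1 := congrFun h0 (k : Fin p)
        simp only [hxe, Pi.zero_apply] at h1
        rw [dif_pos k.2] at h1
        simpa using h1
      have hVx : colSub U (S j) *ᵥ x = U *ᵥ xe := colSub_mulVec U (S j) x
      have hUxe : U *ᵥ xe ≠ 0 := by
        intro h0
        exact hxe0 (hUinj (by simpa [Matrix.mulVec_zero] using h0))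
      have hdot : star x ⬝ᵥ (((colSub U (S j))ᵀ * Cv * colSub U (S j)) *ᵥ x)
          = star (U *ᵥ xe) ⬝ᵥ (Cv *ᵥ (U *ᵥ xe)) := by
        rw [← Matrix.mulVec_mulVec, ← Matrix.mulVec_mulVec, hVx, star_trivial, star_trivial,
          Matrix.dotProduct_mulVec x, Matrix.vecMul_transpose, hVx]
      rw [hdot]
      exact (hCov t).dotProduct_mulVec_pos hUxe
  refine ⟨fun j => ?_, ?_⟩
  · have hMu : IsUnit ((colSub U (S j))ᵀ * Cv * colSub U (S j)) := (hMpd j).isUnit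
    refine ⟨hMu, ?_⟩
    set M := (colSub U (S j))ᵀ * Cv * colSub U (S j) with hM
    set c : {x // x ∈ S j} → ℝ := (colSub ((U⁻¹)ᵀ) (S j))ᵀ *ᵥ γ t with hc
    -- key: (colSub U (S j))ᵀ *ᵥ (Cv *ᵥ γ t) = M *ᵥ c
    have key : (colSub U (S j))ᵀ *ᵥ (Cv *ᵥ γ t) = M *ᵥ c := by
      ext k
      rw [colSub_transpose_mulVec, hAd]
      show (∑ l, A (k : Fin p) l * d l) = ∑ l : {x // x ∈ S j}, M k l * c l
      have hz : ∀ l ∈ (Finset.univ : Finset (Fin p)), l ∉ S j → A (k : Fin p) l * d l = 0 := by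
        intro l _ hl
        obtain ⟨i, hi⟩ := hcover l
        have hij : j ≠ i := by rintro rfl; exact hl hi
        rw [hA, hCv, hblock t j i hij (k : Fin p) k.2 l hi, zero_mul]
      rw [← Finset.sum_subset (Finset.subset_univ (S j)) hz,
        ← Finset.sum_attach (S j) (fun l => A (k : Fin p) l * d l)]
      refine Finset.sum_congr rfl fun l _ => ?_
      rw [hM, colSub_conj, hA, hc, hcS j l]
    rw [key]
    simp only [Matrix.mulVec_mulVec]
    rw [Matrix.nonsing_inv_mul M ((Matrix.isUnit_iff_isUnit_det M).1 hMu),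
      Matrix.mul_one, ← Matrix.mulVec_mulVec, ← hc]
  · -- sum identity
    ext a
    have hsum : ∀ j : Fin q,
        ((colSub U (S j) * (colSub ((U⁻¹)ᵀ) (S j))ᵀ) *ᵥ γ t) a
          = ∑ k ∈ S j, U a k * d k := by
      intro j
      rw [← Matrix.mulVec_mulVec]
      show (∑ k : {x // x ∈ S j}, colSub U (S j) a k
          * ((colSub ((U⁻¹)ᵀ) (S j))ᵀ *ᵥ γ t) k) = _
      rw [← Finset.sum_attach (S j) (fun k => U a k * d k)]
      exact Finset.sum_congr rfl fun k _ => by rw [colSub_apply, hcS]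
    have hpart : ∑ j : Fin q, ∑ k ∈ S j, U a k * d k = ∑ k : Fin p, U a k * d k := by
      have hdisj' : ((Finset.univ : Finset (Fin q)) : Set (Fin q)).PairwiseDisjoint S :=
        fun i _ j _ hij => hdisj i j hij
      rw [← Finset.sum_biUnion hdisj']
      refine Finset.sum_congr ?_ (fun _ _ => rfl)
      apply Finset.eq_univ_iff_forall.2
      intro k
      obtain ⟨j, hj⟩ := hcover k
      exact Finset.mem_biUnion.2 ⟨j, Finset.mem_univ j, hj⟩
    have : γ t a = ∑ k : Fin p, U a k * d k := by
      have : U *ᵥ d = γ t := by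
        rw [hd, Matrix.mulVec_mulVec, Matrix.mul_nonsing_inv U hU, Matrix.one_mulVec]
      rw [← this]
      rfl
    rw [Finset.sum_apply]
    simp_rw [hsum]
    rw [hpart, ← this]
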